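/- Let ζ : ℝ⁺ → ℝ satisfy ζ(μ) = μ + O(μ^{5/4}) as μ → 0⁺ and ∫₀^∞ μ^{-7/4}|ζ(μ)| dμ < ∞. Then the mass function m(r) = M − ∫_r^∞ ζ(q₀²/(2s⁴)) s² ds satisfies m(r) = M − q₀²/(2r) + O(r^{−2}) as r → ∞, and hence e^ξ(r) = 1 − 2M/r + q₀²/r² + O(r^{−3}). -/

import Mathlib

open Set Filter MeasureTheory

theorem stmt_12 (ζ : ℝ → ℝ) (M q₀ : ℝ) (hq : q₀ ≠ 0)
    (hcont : ContinuousOn ζ (Ioi 0))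
    (hweak : ∃ C₀ > 0, ∃ μ₁ > 0, ∀ μ ∈ Ioo 0 μ₁, |ζ μ - μ| ≤ C₀ * μ ^ ((5:ℝ)/4))
    (hint : IntegrableOn (fun μ => μ ^ (-(7:ℝ)/4) * |ζ μ|) (Ioi 0)) :
    ∃ C > 0, ∃ R > 0, ∀ r ≥ R,
      |(M - ∫ s in Ioi r, ζ (q₀^2 / (2 * s^4)) * s^2) - (M - q₀^2 / (2 * r))| ≤ C / r^2 ∧
      |(1 - 2 * (M - ∫ s in Ioi r, ζ (q₀^2 / (2 * s^4)) * s^2) / r)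
        - (1 - 2 * M / r + q₀^2 / r^2)| ≤ C / r^3 := by
  obtain ⟨C₀, hC₀, μ₁, hμ₁, hbd⟩ := hweak
  set a : ℝ := q₀ ^ 2 / 2 with ha
  have ha0 : 0 < a := by positivity
  set K : ℝ := C₀ * a ^ ((5:ℝ)/4) with hK
  have hK0 : 0 < K := by positivity
  refine ⟨K + 1, by positivity, max 1 (a / μ₁ + 1), lt_of_lt_of_le one_pos (le_max_left _ _), ?_⟩
  intro r hr
  have hr1 : (1:ℝ) ≤ r := le_trans (le_max_left _ _) hr
  have hrA : a / μ₁ + 1 ≤ r := le_trans (le_max_right _ _) hr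
  have hr0 : (0:ℝ) < r := lt_of_lt_of_le one_pos hr1
  -- basic facts about points of Ioi r
  have hs0 : ∀ s ∈ Ioi r, (0:ℝ) < s := fun s hs => lt_trans hr0 hs
  have hμmem : ∀ s ∈ Ioi r, a / s ^ 4 ∈ Ioo 0 μ₁ := by
    intro s hs
    have h0s : (0:ℝ) < s := hs0 s hs
    have hs1 : (1:ℝ) ≤ s := le_trans hr1 (le_of_lt hs)
    have hs4 : s ≤ s ^ 4 := le_self_pow₀ hs1 (by norm_num)
    constructor
    · positivity
    · rw [div_lt_iff₀ (by positivity)]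
      have h1 : a / μ₁ < s := lt_of_lt_of_le (by linarith) (le_trans hrA (le_of_lt hs))
      have h2 : a / μ₁ < s ^ 4 := lt_of_lt_of_le h1 hs4
      calc a = (a / μ₁) * μ₁ := by field_simp
        _ < s ^ 4 * μ₁ := by
            exact mul_lt_mul_of_pos_right h2 hμ₁
        _ = μ₁ * s ^ 4 := by ring
  -- rpow computation: (a / s^4) ^ (5/4) = a^(5/4) * s^(-5)
  have hrpow : ∀ s ∈ Ioi r, (a / s ^ 4) ^ ((5:ℝ)/4) = a ^ ((5:ℝ)/4) * s ^ (-(5:ℝ)) := by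
    intro s hs
    have h0s : (0:ℝ) < s := hs0 s hs
    rw [Real.div_rpow ha0.le (by positivity)]
    rw [← Real.rpow_natCast s 4, ← Real.rpow_mul h0s.le]
    rw [div_eq_mul_inv, ← Real.rpow_neg h0s.le]
    norm_num
  -- continuity on Ioi r
  have hμcont : ContinuousOn (fun s : ℝ => a / s ^ 4) (Ioi r) :=
    ContinuousOn.div continuousOn_const (continuous_pow 4).continuousOn
      (fun s hs => pow_ne_zero 4 (ne_of_gt (hs0 s hs)))
  have hfcont : ContinuousOn (fun s : ℝ => ζ (a / s ^ 4)) (Ioi r) :=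
    hcont.comp hμcont (fun s hs => (hμmem s hs).1)
  -- the error function g
  set g : ℝ → ℝ := fun s => (ζ (a / s ^ 4) - a / s ^ 4) * s ^ 2 with hg
  have hgcont : ContinuousOn g (Ioi r) :=
    ((hfcont.sub hμcont).mul (continuous_pow 2).continuousOn)
  -- bound on g
  have hgbd : ∀ s ∈ Ioi r, ‖g s‖ ≤ K * s ^ (-(3:ℝ)) := by
    intro s hs
    have h0s : (0:ℝ) < s := hs0 s hs
    have h1 : |ζ (a / s ^ 4) - a / s ^ 4| ≤ C₀ * (a / s ^ 4) ^ ((5:ℝ)/4) :=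
      hbd _ (hμmem s hs)
    have : ‖g s‖ = |ζ (a / s ^ 4) - a / s ^ 4| * s ^ 2 := by
      rw [hg]; simp [abs_mul, abs_of_nonneg (sq_nonneg s), sq_abs]
    rw [this, hrpow s hs] at *
    calc |ζ (a / s ^ 4) - a / s ^ 4| * s ^ 2
        ≤ C₀ * (a ^ ((5:ℝ)/4) * s ^ (-(5:ℝ))) * s ^ 2 := by
          apply mul_le_mul_of_nonneg_right h1 (sq_nonneg s)
      _ = K * (s ^ (-(5:ℝ)) * s ^ (2:ℝ)) := by
          rw [← Real.rpow_natCast s 2]; push_cast; ring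
      _ = K * s ^ (-(3:ℝ)) := by
          rw [← Real.rpow_add h0s]; norm_num
  -- integrability of the bound and of the main power term
  have hI2 : IntegrableOn (fun s : ℝ => a * s ^ (-(2:ℝ))) (Ioi r) :=
    (integrableOn_Ioi_rpow_of_lt (by norm_num) hr0).const_mul a
  have hI3 : IntegrableOn (fun s : ℝ => K * s ^ (-(3:ℝ))) (Ioi r) :=
    (integrableOn_Ioi_rpow_of_lt (by norm_num) hr0).const_mul K
  have hgmeas : AEStronglyMeasurable g (volume.restrict (Ioi r)) :=
    hgcont.aestronglyMeasurable measurableSet_Ioi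
  have hgae : ∀ᵐ s ∂volume.restrict (Ioi r), ‖g s‖ ≤ K * s ^ (-(3:ℝ)) :=
    (ae_restrict_iff' measurableSet_Ioi).2 (Filter.Eventually.of_forall hgbd)
  have hgint : IntegrableOn g (Ioi r) := Integrable.mono' hI3 hgmeas hgae
  -- integral computations
  have hint2 : ∫ s in Ioi r, a * s ^ (-(2:ℝ)) = a / r := by
    rw [MeasureTheory.integral_const_mul, integral_Ioi_rpow_of_lt (by norm_num) hr0]
    rw [show (-(2:ℝ) + 1) = -1 by norm_num, Real.rpow_neg_one]
    field_simp
  have hint3 : ∫ s in Ioi r, K * s ^ (-(3:ℝ)) = K / (2 * r ^ 2) := by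
    rw [MeasureTheory.integral_const_mul, integral_Ioi_rpow_of_lt (by norm_num) hr0]
    rw [show (-(3:ℝ) + 1) = -2 by norm_num, Real.rpow_neg hr0.le]
    rw [show ((2:ℝ)) = ((2:ℕ):ℝ) by norm_num, Real.rpow_natCast]
    push_cast
    rw [neg_div_neg_eq, eq_div_iff (by positivity : (2:ℝ) * r ^ 2 ≠ 0)]
    field_simp
  -- decompose the main integral
  have hsplit : ∫ s in Ioi r, ζ (q₀ ^ 2 / (2 * s ^ 4)) * s ^ 2
      = a / r + ∫ s in Ioi r, g s := by
    have heq : EqOn (fun s : ℝ => ζ (q₀ ^ 2 / (2 * s ^ 4)) * s ^ 2)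
        (fun s : ℝ => a * s ^ (-(2:ℝ)) + g s) (Ioi r) := by
      intro s hs
      have h0s : (0:ℝ) < s := hs0 s hs
      have hq2 : q₀ ^ 2 / (2 * s ^ 4) = a / s ^ 4 := by rw [ha]; ring
      have hps : a * s ^ (-(2:ℝ)) = (a / s ^ 4) * s ^ 2 := by
        rw [Real.rpow_neg h0s.le, show ((2:ℝ)) = ((2:ℕ):ℝ) by norm_num,
          Real.rpow_natCast]
        field_simp
      simp only [hq2, hg, hps]
      ring
    rw [setIntegral_congr_fun measurableSet_Ioi heq,
      MeasureTheory.integral_add hI2 hgint, hint2]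
  -- bound on the error integral
  have herr : |∫ s in Ioi r, g s| ≤ K / (2 * r ^ 2) := by
    rw [← hint3, ← Real.norm_eq_abs]
    exact norm_integral_le_of_norm_le hI3 hgae
  -- first conclusion
  have hdiff1 : (M - ∫ s in Ioi r, ζ (q₀ ^ 2 / (2 * s ^ 4)) * s ^ 2) - (M - q₀ ^ 2 / (2 * r))
      = -(∫ s in Ioi r, g s) := by
    rw [hsplit]
    have : q₀ ^ 2 / (2 * r) = a / r := by rw [ha]; ring
    rw [this]; ring
  have hb1 : |(M - ∫ s in Ioi r, ζ (q₀ ^ 2 / (2 * s ^ 4)) * s ^ 2) - (M - q₀ ^ 2 / (2 * r))|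
      ≤ (K + 1) / r ^ 2 := by
    rw [hdiff1, abs_neg]
    refine le_trans herr ?_
    rw [div_le_div_iff₀ (by positivity) (by positivity)]
    nlinarith [sq_nonneg r, hK0.le]
  refine ⟨hb1, ?_⟩
  -- second conclusion
  have hdiff2 : (1 - 2 * (M - ∫ s in Ioi r, ζ (q₀ ^ 2 / (2 * s ^ 4)) * s ^ 2) / r)
      - (1 - 2 * M / r + q₀ ^ 2 / r ^ 2)
      = (2 / r) * ((∫ s in Ioi r, g s)) := by
    rw [hsplit]
    field_simp
    ring
  rw [hdiff2, abs_mul, abs_of_nonneg (by positivity : (0:ℝ) ≤ 2 / r)]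
  calc 2 / r * |∫ s in Ioi r, g s| ≤ 2 / r * (K / (2 * r ^ 2)) := by
        exact mul_le_mul_of_nonneg_left herr (by positivity)
    _ = K / r ^ 3 := by field_simp
    _ ≤ (K + 1) / r ^ 3 := by
        apply div_le_div_of_nonneg_right ?_ (by positivity)
        · linarith
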